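/- Let R = 𝕜[x_1,…,x_N, y_1, y_2, y_3, …] be the graded polynomial ring with deg x_a = 2a and deg y_b = 2b, and let I be the ideal of R generated, for each d ≥ 1, by the element Σ_{a+b=d} x_a·y_b (the sum over all a, b ≥ 0 with a + b = d, where x_0 = y_0 = 1 and x_a = 0 for a > N). Then the composite of the inclusion 𝕜[x_1,…,x_N] → R with the quotient map R → R/I is an isomorphism of graded 𝕜-algebras; in particular R/I is isomorphic to the polynomial ring 𝕜[x_1,…,x_N]. (R/I is the GL(N,ℂ)-equivariant cohomology of a point, H^*_{GL(N)}(pt) = H^*(Gr(N,∞)).) -/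

import Mathlib

/-!
The `GL(N,ℂ)`-equivariant cohomology of a point:
`H^*_{GL(N)}(pt) = H^*(Gr(N,∞)) ≅ 𝕜[x_1, …, x_N]`.
-/

open MvPolynomial Finset

set_option synthInstance.maxHeartbeats 1000000
set_option maxHeartbeats 1000000

noncomputable section

variable (𝕜 : Type) [Field 𝕜] (N : ℕ)

/-- The generator `x_a` (of degree `2a`) of `R = 𝕜[x_1,…,x_N,y_1,y_2,…]`, with the
conventions `x_0 = 1` and `x_a = 0` for `a > N`. -/
def xg (a : ℕ) : MvPolynomial (Fin N ⊕ ℕ) 𝕜 :=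
  if h : 1 ≤ a ∧ a ≤ N then X (Sum.inl ⟨a - 1, by omega⟩)
  else if a = 0 then 1 else 0

/-- The generator `y_b` (of degree `2b`) of `R`, with the convention `y_0 = 1`. -/
def yg (b : ℕ) : MvPolynomial (Fin N ⊕ ℕ) 𝕜 :=
  if b = 0 then 1 else X (Sum.inr (b - 1))

/-- The ideal `I` generated, for each `d ≥ 1`, by `∑_{a+b=d} x_a · y_b`. -/
def relIdealGr : Ideal (MvPolynomial (Fin N ⊕ ℕ) 𝕜) :=
  Ideal.span {p | ∃ d, 1 ≤ d ∧
    p = ∑ ab ∈ Finset.HasAntidiagonal.antidiagonal d, xg 𝕜 N ab.1 * yg 𝕜 N ab.2}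

/-- The composite `𝕜[x_1,…,x_N] → R → R/I`. -/
def grComposite : MvPolynomial (Fin N) 𝕜 →ₐ[𝕜] MvPolynomial (Fin N ⊕ ℕ) 𝕜 ⧸ relIdealGr 𝕜 N :=
  (Ideal.Quotient.mkₐ 𝕜 (relIdealGr 𝕜 N)).comp (MvPolynomial.rename Sum.inl)

/-! Auxiliary development -/

/-- `x_a` viewed inside `𝕜[x_1,…,x_N]`. -/
def xg' (a : ℕ) : MvPolynomial (Fin N) 𝕜 :=
  if h : 1 ≤ a ∧ a ≤ N then X ⟨a - 1, by omega⟩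
  else if a = 0 then 1 else 0

lemma xg_eq_rename (a : ℕ) : xg 𝕜 N a = rename Sum.inl (xg' 𝕜 N a) := by
  unfold xg xg'
  split_ifs <;> simp

/-- The image of `y_b` in `𝕜[x_1,…,x_N]`, defined recursively by the relations. -/
def cpoly : ℕ → MvPolynomial (Fin N) 𝕜
  | 0 => 1
  | (b + 1) => -∑ i ∈ Finset.range (b + 1), xg' 𝕜 N (i + 1) * cpoly (b - i)

/-- The key relation defining `cpoly`. -/
lemma cpoly_rel (d : ℕ) (hd : 1 ≤ d) :
    ∑ ab ∈ Finset.HasAntidiagonal.antidiagonal d, xg' 𝕜 N ab.1 * cpoly 𝕜 N ab.2 = 0 := by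
  obtain ⟨b, rfl⟩ : ∃ b, d = b + 1 := ⟨d - 1, by omega⟩
  rw [Finset.Nat.sum_antidiagonal_eq_sum_range_succ_mk, Finset.sum_range_succ']
  have h0 : xg' 𝕜 N 0 = 1 := by unfold xg'; simp
  have : ∀ i ∈ Finset.range (b + 1),
      xg' 𝕜 N (i + 1) * cpoly 𝕜 N (b + 1 - (i + 1)) =
      xg' 𝕜 N (i + 1) * cpoly 𝕜 N (b - i) := by
    intro i _; congr 2; omega
  rw [Finset.sum_congr rfl this, h0, one_mul]
  show _ + cpoly 𝕜 N (b + 1) = 0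
  rw [cpoly]; ring

/-- The retraction `R → 𝕜[x_1,…,x_N]`. -/
def retr : MvPolynomial (Fin N ⊕ ℕ) 𝕜 →ₐ[𝕜] MvPolynomial (Fin N) 𝕜 :=
  aeval (Sum.elim X fun b => cpoly 𝕜 N (b + 1))

lemma retr_xg (a : ℕ) : retr 𝕜 N (xg 𝕜 N a) = xg' 𝕜 N a := by
  unfold retr xg xg'
  split_ifs <;> simp

lemma retr_yg (b : ℕ) : retr 𝕜 N (yg 𝕜 N b) = cpoly 𝕜 N b := by
  unfold retr yg
  rcases b with _ | b
  · simp [cpoly]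
  · simp

lemma retr_rename (p : MvPolynomial (Fin N) 𝕜) : retr 𝕜 N (rename Sum.inl p) = p := by
  rw [retr, aeval_rename]
  have : (Sum.elim X (fun b => cpoly 𝕜 N (b + 1)) ∘ Sum.inl : Fin N → MvPolynomial (Fin N) 𝕜)
      = X := rfl
  rw [this, aeval_X_left_apply]

lemma retr_vanish : ∀ a ∈ relIdealGr 𝕜 N, retr 𝕜 N a = 0 := by
  intro a ha
  refine (Ideal.span_le.mpr ?_ : relIdealGr 𝕜 N ≤ RingHom.ker (retr 𝕜 N)) ha
  rintro p ⟨d, hd, rfl⟩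
  simp only [SetLike.mem_coe, RingHom.mem_ker, map_sum, map_mul, retr_xg, retr_yg]
  exact cpoly_rel 𝕜 N d hd

/-- The induced map `R/I → 𝕜[x_1,…,x_N]`. -/
def retrBar : (MvPolynomial (Fin N ⊕ ℕ) 𝕜 ⧸ relIdealGr 𝕜 N) →ₐ[𝕜] MvPolynomial (Fin N) 𝕜 :=
  Ideal.Quotient.liftₐ (relIdealGr 𝕜 N) (retr 𝕜 N) (retr_vanish 𝕜 N)

lemma retrBar_mk (p : MvPolynomial (Fin N ⊕ ℕ) 𝕜) :
    retrBar 𝕜 N (Ideal.Quotient.mk (relIdealGr 𝕜 N) p) = retr 𝕜 N p := by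
  simp only [retrBar, Ideal.Quotient.liftₐ_apply]
  exact Ideal.Quotient.lift_mk _ _ _

lemma left_inv : Function.LeftInverse (retrBar 𝕜 N) (grComposite 𝕜 N) := by
  intro p
  show retrBar 𝕜 N (Ideal.Quotient.mkₐ 𝕜 _ (rename Sum.inl p)) = p
  rw [Ideal.Quotient.mkₐ_eq_mk, retrBar_mk, retr_rename]

lemma mk_yg (b : ℕ) :
    Ideal.Quotient.mk (relIdealGr 𝕜 N) (yg 𝕜 N b) =
    Ideal.Quotient.mk (relIdealGr 𝕜 N) (rename Sum.inl (cpoly 𝕜 N b)) := by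
  induction b using Nat.strong_induction_on with
  | _ b ih =>
  rcases b with _ | b
  · simp [yg, cpoly]
  · have hgen : Ideal.Quotient.mk (relIdealGr 𝕜 N)
        (∑ ab ∈ Finset.HasAntidiagonal.antidiagonal (b + 1), xg 𝕜 N ab.1 * yg 𝕜 N ab.2) = 0 := by
      rw [Ideal.Quotient.eq_zero_iff_mem]
      exact Ideal.subset_span ⟨b + 1, by omega, rfl⟩
    rw [Finset.Nat.sum_antidiagonal_eq_sum_range_succ_mk, Finset.sum_range_succ'] at hgen
    have h0 : xg 𝕜 N 0 = 1 := by unfold xg; simp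
    simp only [Nat.sub_zero, h0, one_mul, map_add] at hgen
    have hyb : Ideal.Quotient.mk (relIdealGr 𝕜 N) (yg 𝕜 N (b + 1)) =
        -Ideal.Quotient.mk (relIdealGr 𝕜 N)
          (∑ i ∈ Finset.range (b + 1), xg 𝕜 N (i + 1) * yg 𝕜 N (b + 1 - (i + 1))) :=
      eq_neg_of_add_eq_zero_right hgen
    have key : ∀ i ∈ Finset.range (b + 1),
        Ideal.Quotient.mk (relIdealGr 𝕜 N) (xg 𝕜 N (i + 1) * yg 𝕜 N (b + 1 - (i + 1))) =
        Ideal.Quotient.mk (relIdealGr 𝕜 N)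
          (rename Sum.inl (xg' 𝕜 N (i + 1) * cpoly 𝕜 N (b - i))) := by
      intro i hi
      rw [Finset.mem_range] at hi
      have hsub : b + 1 - (i + 1) = b - i := by omega
      rw [hsub, map_mul, map_mul, map_mul, xg_eq_rename, ih (b - i) (by omega)]
    rw [hyb, map_sum, Finset.sum_congr rfl key, cpoly, map_neg, map_neg, map_sum, map_sum]

lemma right_inv : Function.RightInverse (retrBar 𝕜 N) (grComposite 𝕜 N) := by
  have surj : Function.Surjective (grComposite 𝕜 N) := by
    intro q
    obtain ⟨r, rfl⟩ := Ideal.Quotient.mk_surjective q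
    suffices h : Ideal.Quotient.mk (relIdealGr 𝕜 N) r ∈ (grComposite 𝕜 N).range by
      obtain ⟨p, hp⟩ := h; exact ⟨p, hp⟩
    induction r using MvPolynomial.induction_on with
    | C a =>
      refine (AlgHom.mem_range (grComposite 𝕜 N)).mpr ⟨C a, ?_⟩
      rw [← MvPolynomial.algebraMap_eq, AlgHom.commutes, ← Ideal.Quotient.mkₐ_eq_mk 𝕜,
        ← MvPolynomial.algebraMap_eq, AlgHom.commutes]
    | add p q hp hq =>
      rw [map_add]; exact add_mem hp hq
    | mul_X p v hp =>
      rw [map_mul]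
      refine mul_mem hp ?_
      cases v with
      | inl i => exact ⟨X i, by simp [grComposite]⟩
      | inr b =>
        refine ⟨cpoly 𝕜 N (b + 1), ?_⟩
        have : (X (Sum.inr b) : MvPolynomial (Fin N ⊕ ℕ) 𝕜) = yg 𝕜 N (b + 1) := by
          unfold yg; simp
        simp only [grComposite, AlgHom.comp_apply, Ideal.Quotient.mkₐ_eq_mk, this]
        exact (mk_yg 𝕜 N (b + 1)).symm
  exact (left_inv 𝕜 N).rightInverse_of_surjective surj

lemma aeval_homog {σ τ : Type} {w : σ → ℕ} {w' : τ → ℕ}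
    (f : σ → MvPolynomial τ 𝕜) (hf : ∀ i, (f i).IsWeightedHomogeneous w' (w i))
    {p : MvPolynomial σ 𝕜} {d : ℕ} (hp : p.IsWeightedHomogeneous w d) :
    (aeval f p).IsWeightedHomogeneous w' d := by
  classical
  rw [← p.support_sum_monomial_coeff, map_sum]
  apply IsWeightedHomogeneous.sum
  intro s hs
  have hws : Finsupp.weight w s = d := hp (mem_support_iff.mp hs)
  rw [aeval_monomial]
  have h1 : (algebraMap 𝕜 (MvPolynomial τ 𝕜) (coeff s p)).IsWeightedHomogeneous w' 0 :=
    isWeightedHomogeneous_C _ _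
  have h2 : (s.prod fun i k => f i ^ k).IsWeightedHomogeneous w'
      (∑ i ∈ s.support, s i * w i) := by
    rw [Finsupp.prod]
    apply IsWeightedHomogeneous.prod
    intro i _
    induction s i with
    | zero => simpa using isWeightedHomogeneous_one 𝕜 w'
    | succ k ih =>
      have := ih.mul (hf i)
      rw [pow_succ]
      convert this using 1
      ring
  have := h1.mul h2
  rw [zero_add] at this
  convert this using 1
  rw [← hws, Finsupp.weight_apply, Finsupp.sum]
  simp [mul_comm]

abbrev wL : Fin N → ℕ := fun a => 2 * ((a : ℕ) + 1)
abbrev wS : Fin N ⊕ ℕ → ℕ := Sum.elim (fun a : Fin N => 2 * ((a : ℕ) + 1)) (fun b : ℕ => 2 * (b + 1))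

lemma xg'_homog (a : ℕ) : (xg' 𝕜 N a).IsWeightedHomogeneous (wL N) (2 * a) := by
  unfold xg'
  split_ifs with h h'
  · have := isWeightedHomogeneous_X 𝕜 (wL N) (⟨a - 1, by omega⟩ : Fin N)
    convert this using 1
    simp only [wL]
    omega
  · subst h'
    simpa using isWeightedHomogeneous_one 𝕜 (wL N)
  · exact isWeightedHomogeneous_zero 𝕜 _ _

lemma cpoly_homog (b : ℕ) : (cpoly 𝕜 N b).IsWeightedHomogeneous (wL N) (2 * b) := by
  induction b using Nat.strong_induction_on with
  | _ b ih =>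
  rcases b with _ | b
  · simpa [cpoly] using isWeightedHomogeneous_one 𝕜 (wL N)
  · rw [cpoly]
    rw [← mem_weightedHomogeneousSubmodule]
    refine neg_mem (Submodule.sum_mem _ fun i hi => ?_)
    rw [Finset.mem_range] at hi
    rw [mem_weightedHomogeneousSubmodule]
    have := (xg'_homog 𝕜 N (i + 1)).mul (ih (b - i) (by omega))
    convert this using 1
    omega

lemma retr_homog {q : MvPolynomial (Fin N ⊕ ℕ) 𝕜} {d : ℕ}
    (hq : q.IsWeightedHomogeneous (wS N) d) :
    (retr 𝕜 N q).IsWeightedHomogeneous (wL N) d := by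
  refine aeval_homog 𝕜 _ ?_ hq
  rintro (i | b)
  · exact isWeightedHomogeneous_X 𝕜 (wL N) i
  · exact cpoly_homog 𝕜 N (b + 1)

lemma rename_homog {p : MvPolynomial (Fin N) 𝕜} {d : ℕ}
    (hp : p.IsWeightedHomogeneous (wL N) d) :
    (rename Sum.inl p : MvPolynomial (Fin N ⊕ ℕ) 𝕜).IsWeightedHomogeneous (wS N) d := by
  have : (rename (Sum.inl : Fin N → Fin N ⊕ ℕ) p : MvPolynomial (Fin N ⊕ ℕ) 𝕜)
      = aeval (fun i => X (Sum.inl i)) p := by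
    exact DFunLike.congr_fun (MvPolynomial.algHom_ext fun i => by simp) p
  rw [this]
  refine aeval_homog 𝕜 _ ?_ hp
  intro i
  exact isWeightedHomogeneous_X 𝕜 (wS N) (Sum.inl i)

-- STATEMENT 14
theorem stmt14 :
    Function.Bijective (grComposite 𝕜 N) ∧
    ∀ d : ℕ,
      Submodule.map (grComposite 𝕜 N).toLinearMap
        (weightedHomogeneousSubmodule 𝕜 (fun a : Fin N => 2 * ((a : ℕ) + 1)) d) =
      Submodule.map (Ideal.Quotient.mkₐ 𝕜 (relIdealGr 𝕜 N)).toLinearMap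
        (weightedHomogeneousSubmodule 𝕜
          (Sum.elim (fun a : Fin N => 2 * ((a : ℕ) + 1)) (fun b : ℕ => 2 * (b + 1))) d) := by
  constructor
  · exact ⟨(left_inv 𝕜 N).injective, (right_inv 𝕜 N).surjective⟩
  · intro d
    apply le_antisymm
    · rintro x ⟨p, hp, rfl⟩
      rw [SetLike.mem_coe, mem_weightedHomogeneousSubmodule] at hp
      refine Submodule.mem_map.mpr ⟨rename Sum.inl p, ?_, ?_⟩
      · exact (mem_weightedHomogeneousSubmodule _ _ _ _).mpr (rename_homog 𝕜 N hp)
      · rfl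
    · rintro x ⟨q, hq, rfl⟩
      rw [SetLike.mem_coe, mem_weightedHomogeneousSubmodule] at hq
      refine Submodule.mem_map.mpr
        ⟨retr 𝕜 N q, (mem_weightedHomogeneousSubmodule _ _ _ _).mpr (retr_homog 𝕜 N hq), ?_⟩
      have h1 : (grComposite 𝕜 N).toLinearMap (retr 𝕜 N q)
          = grComposite 𝕜 N (retrBar 𝕜 N (Ideal.Quotient.mk (relIdealGr 𝕜 N) q)) := by
        rw [retrBar_mk]; rfl
      rw [h1, right_inv 𝕜 N]
      rfl



end
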